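/- arXiv:0802.0476 — 2 statements merged into one kernel-verified Lean document; each statement's English description precedes it below -/
import Mathlib

section
/- For every n ≥ 1, the set C of all n×n complex matrices φ = (φ_{ij}) for which there exist x, y ∈ ℂⁿ with Σ_i |x_i|² ≤ 1, Σ_j |y_j|² ≤ 1 and |φ_{ij}| ≤ |x_i|·|y_j| for all i, j, is a convex subset of the vector space of n×n complex matrices. -/
noncomputable section
open scoped BigOperators

/-- For every `n ≥ 1`, the set `C` of all `n×n` complex matrices `φ`
for which there exist `x, y ∈ ℂⁿ` with `Σ|x_i|² ≤ 1`, `Σ|y_j|² ≤ 1` and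
`|φ_{ij}| ≤ |x_i||y_j|` for all `i, j`, is convex (as a subset of the real vector space
of `n×n` complex matrices). -/
theorem statement1 (n : ℕ) (hn : 1 ≤ n) :
    Convex ℝ {φ : Matrix (Fin n) (Fin n) ℂ | ∃ x y : Fin n → ℂ,
      (∑ i, ‖x i‖ ^ 2) ≤ 1 ∧ (∑ j, ‖y j‖ ^ 2) ≤ 1 ∧
      ∀ i j, ‖φ i j‖ ≤ ‖x i‖ * ‖y j‖} := by
  rintro φ ⟨x, y, hx, hy, h⟩ φ' ⟨x', y', hx', hy', h'⟩ a b ha hb hab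
  refine ⟨fun i => (Real.sqrt (a * ‖x i‖ ^ 2 + b * ‖x' i‖ ^ 2) : ℂ),
    fun j => (Real.sqrt (a * ‖y j‖ ^ 2 + b * ‖y' j‖ ^ 2) : ℂ), ?_, ?_, ?_⟩
  · have : ∀ i : Fin n, ‖((Real.sqrt (a * ‖x i‖ ^ 2
        + b * ‖x' i‖ ^ 2) : ℝ) : ℂ)‖ ^ 2
        = a * ‖x i‖ ^ 2 + b * ‖x' i‖ ^ 2 := by
      intro i
      rw [Complex.norm_real, Real.norm_eq_abs, abs_of_nonneg (Real.sqrt_nonneg _), Real.sq_sqrt]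
      positivity
    simp only [this]
    rw [Finset.sum_add_distrib, ← Finset.mul_sum, ← Finset.mul_sum]
    nlinarith [Finset.sum_nonneg (fun i (_ : i ∈ Finset.univ) =>
      sq_nonneg (‖x i‖)), Finset.sum_nonneg (fun i (_ : i ∈ Finset.univ) =>
      sq_nonneg (‖x' i‖))]
  · have : ∀ j : Fin n, ‖((Real.sqrt (a * ‖y j‖ ^ 2
        + b * ‖y' j‖ ^ 2) : ℝ) : ℂ)‖ ^ 2
        = a * ‖y j‖ ^ 2 + b * ‖y' j‖ ^ 2 := by
      intro j
      rw [Complex.norm_real, Real.norm_eq_abs, abs_of_nonneg (Real.sqrt_nonneg _), Real.sq_sqrt]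
      positivity
    simp only [this]
    rw [Finset.sum_add_distrib, ← Finset.mul_sum, ← Finset.mul_sum]
    nlinarith [Finset.sum_nonneg (fun j (_ : j ∈ Finset.univ) =>
      sq_nonneg (‖y j‖)), Finset.sum_nonneg (fun j (_ : j ∈ Finset.univ) =>
      sq_nonneg (‖y' j‖))]
  · intro i j
    have h1 : ‖(a • φ + b • φ') i j‖
        ≤ a * (‖x i‖ * ‖y j‖)
          + b * (‖x' i‖ * ‖y' j‖) := by
      have : (a • φ + b • φ') i j = (a : ℂ) * φ i j + (b : ℂ) * φ' i j := by
        simp [Matrix.add_apply, Matrix.smul_apply, Complex.real_smul]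
      rw [this]
      calc ‖(a : ℂ) * φ i j + (b : ℂ) * φ' i j‖
          ≤ ‖(a : ℂ) * φ i j‖ + ‖(b : ℂ) * φ' i j‖ :=
            norm_add_le _ _
        _ = a * ‖φ i j‖ + b * ‖φ' i j‖ := by
            simp [map_mul, Complex.norm_real, Real.norm_eq_abs, abs_of_nonneg ha, abs_of_nonneg hb]
        _ ≤ a * (‖x i‖ * ‖y j‖)
            + b * (‖x' i‖ * ‖y' j‖) := by
            gcongr
            · exact h i j
            · exact h' i j
    have h2 : a * (‖x i‖ * ‖y j‖)
          + b * (‖x' i‖ * ‖y' j‖)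
        ≤ Real.sqrt (a * ‖x i‖ ^ 2 + b * ‖x' i‖ ^ 2)
          * Real.sqrt (a * ‖y j‖ ^ 2 + b * ‖y' j‖ ^ 2) := by
      rw [← Real.sqrt_mul (by positivity)]
      rw [show (Real.sqrt ((a * ‖x i‖ ^ 2 + b * ‖x' i‖ ^ 2)
        * (a * ‖y j‖ ^ 2 + b * ‖y' j‖ ^ 2))) =
        Real.sqrt ((a * ‖x i‖ ^ 2 + b * ‖x' i‖ ^ 2)
        * (a * ‖y j‖ ^ 2 + b * ‖y' j‖ ^ 2)) from rfl]
      rw [Real.le_sqrt (by positivity) (by positivity)]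
      nlinarith [sq_nonneg (‖x i‖ * ‖y' j‖
        - ‖x' i‖ * ‖y j‖), mul_nonneg ha hb,
        norm_nonneg (x i), norm_nonneg (y j),
        norm_nonneg (x' i), norm_nonneg (y' j)]
    calc ‖(a • φ + b • φ') i j‖ ≤ _ := h1
      _ ≤ _ := h2
      _ = ‖((Real.sqrt (a * ‖x i‖ ^ 2 + b * ‖x' i‖ ^ 2) : ℝ) : ℂ)‖
          * ‖((Real.sqrt (a * ‖y j‖ ^ 2 + b * ‖y' j‖ ^ 2) : ℝ) : ℂ)‖ := by
          simp [Complex.norm_real, Real.norm_eq_abs, abs_of_nonneg (Real.sqrt_nonneg _)]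
end
end

section
/- For every n ≥ 1 and every n×n complex matrix φ = (φ_{ij}), the following are equivalent: (a) there exist x, y ∈ ℂⁿ with Σ_i |x_i|² ≤ 1, Σ_j |y_j|² ≤ 1 and |φ_{ij}| ≤ |x_i|·|y_j| for all i, j; (b) there exist vectors h_1, …, h_n and k_1, …, k_n in ℂⁿ such that φ_{ij} = Σ_{m=1}^n h_i(m) k_j(m) for all i, j, with Σ_{i=1}^n ‖h_i‖²_{ℓⁿ₁} ≤ 1 and Σ_{j=1}^n ‖k_j‖²_{ℓⁿ_∞} ≤ 1. -/
noncomputable section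
open scoped BigOperators

/-- For every `n ≥ 1` and every `n×n` complex matrix `φ`, the following
are equivalent: (a) there exist `x, y ∈ ℂⁿ` with `Σ|x_i|² ≤ 1`, `Σ|y_j|² ≤ 1` and
`|φ_{ij}| ≤ |x_i||y_j|`; (b) there exist `h_1,…,h_n` and `k_1,…,k_n` in `ℂⁿ` with
`φ_{ij} = Σ_m h_i(m) k_j(m)`, `Σ_i ‖h_i‖²_{ℓⁿ₁} ≤ 1` and `Σ_j ‖k_j‖²_{ℓⁿ_∞} ≤ 1`. -/
theorem statement2 (n : ℕ) (hn : 1 ≤ n) (φ : Matrix (Fin n) (Fin n) ℂ) :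
    (∃ x y : Fin n → ℂ,
      (∑ i, ‖x i‖ ^ 2) ≤ 1 ∧ (∑ j, ‖y j‖ ^ 2) ≤ 1 ∧
      ∀ i j, ‖φ i j‖ ≤ ‖x i‖ * ‖y j‖) ↔
    (∃ h k : Fin n → Fin n → ℂ,
      (∀ i j, φ i j = ∑ m, h i m * k j m) ∧
      (∑ i, (∑ m, ‖h i m‖) ^ 2) ≤ 1 ∧
      (∑ j, (⨆ m, ‖k j m‖) ^ 2) ≤ 1) := by
  have hne : Nonempty (Fin n) := ⟨⟨0, hn⟩⟩
  constructor
  · rintro ⟨x, y, hx, hy, hφ⟩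
    refine ⟨fun i m => if m = i then x i else 0,
            fun j m => if x m = 0 then 0 else φ m j / x m, ?_, ?_, ?_⟩
    · intro i j
      rw [Finset.sum_eq_single i (fun b _ hb => by simp [hb]) (by simp)]
      by_cases hxi : x i = 0
      · have h0 : ‖φ i j‖ ≤ 0 := by simpa [hxi] using hφ i j
        have : φ i j = 0 := by
          have := le_antisymm h0 (norm_nonneg _)
          exact norm_eq_zero.mp this
        simp [hxi, this]
      · show φ i j = (if i = i then x i else 0) * (if x i = 0 then 0 else φ i j / x i)
        rw [if_pos rfl, if_neg hxi]
        field_simp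
    · calc (∑ i, (∑ m, ‖if m = i then x i else 0‖) ^ 2)
          = ∑ i, ‖x i‖ ^ 2 := by
            refine Finset.sum_congr rfl fun i _ => ?_
            congr 1
            rw [Finset.sum_eq_single i (fun b _ hb => by simp [hb]) (by simp)]
            simp
      _ ≤ 1 := hx
    · have hsup : ∀ j, (⨆ m, ‖if x m = 0 then 0 else φ m j / x m‖)
          ≤ ‖y j‖ := by
        intro j
        refine ciSup_le fun m => ?_
        by_cases hxm : x m = 0
        · simp [hxm]
        · rw [if_neg hxm, norm_div]
          rw [div_le_iff₀ (by simpa using hxm)]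
          exact (hφ m j).trans_eq (mul_comm _ _)
      calc (∑ j, (⨆ m, ‖if x m = 0 then 0 else φ m j / x m‖) ^ 2)
          ≤ ∑ j, ‖y j‖ ^ 2 := by
            refine Finset.sum_le_sum fun j _ => ?_
            refine pow_le_pow_left₀ ?_ (hsup j) 2
            exact Real.iSup_nonneg fun m => by positivity
      _ ≤ 1 := hy
  · rintro ⟨h, k, hfac, hh, hk⟩
    refine ⟨fun i => ((∑ m, ‖h i m‖ : ℝ) : ℂ),
            fun j => ((⨆ m, ‖k j m‖ : ℝ) : ℂ), ?_, ?_, ?_⟩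
    · refine le_trans (le_of_eq ?_) hh
      refine Finset.sum_congr rfl fun i _ => ?_
      rw [Complex.norm_real, Real.norm_eq_abs, abs_of_nonneg (by positivity)]
    · refine le_trans (le_of_eq ?_) hk
      refine Finset.sum_congr rfl fun j _ => ?_
      rw [Complex.norm_real, Real.norm_eq_abs,
        abs_of_nonneg (Real.iSup_nonneg fun m => norm_nonneg _)]
    · intro i j
      rw [Complex.norm_real, Real.norm_eq_abs, Complex.norm_real, Real.norm_eq_abs,
        abs_of_nonneg (show (0:ℝ) ≤ ∑ m, ‖h i m‖ by positivity),
        abs_of_nonneg (Real.iSup_nonneg fun m => norm_nonneg _)]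
      rw [hfac i j]
      calc ‖∑ m, h i m * k j m‖
          ≤ ∑ m, ‖h i m * k j m‖ := norm_sum_le _ _
      _ ≤ ∑ m, ‖h i m‖ * (⨆ m', ‖k j m'‖) := by
            refine Finset.sum_le_sum fun m _ => ?_
            rw [norm_mul]
            refine mul_le_mul_of_nonneg_left ?_ (norm_nonneg _)
            exact le_ciSup (f := fun m' => ‖k j m'‖) (Set.Finite.bddAbove (Set.finite_range _)) m
      _ = (∑ m, ‖h i m‖) * (⨆ m', ‖k j m'‖) := by
            rw [Finset.sum_mul]
end
end
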